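/- Let (E, F) be a Finsler algebroid and f ∈ C^∞(M). Define grad(f^∨) by d^L(f^∨) = i_{grad f^∨} ω, where ω is the fundamental form. Then: (i) grad(f^∨) is a vertical section of L^π E, (ii) [C, grad f^∨]_L = −grad f^∨, and (iii) ρ_L(grad f^∨)(F) = f^c. -/

import Mathlib

/-!
We work with a Lie algebroid `π : E → M` in a (global) trivialization:
the base `M` is modelled on a real normed space `A`, the fibre of `E` is a real
normed space `B`, the total space is `E = A × B`, sections of `E` are maps
`A → B`, the anchor is `ρ : A → (B →L[ℝ] A)` and the structure function of the
bracket is `Lb : A → (B →L[ℝ] B →L[ℝ] B)`.  The prolongation `L^π E → E` is the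
trivial bundle with fibre `B × B`; its sections are pairs of maps `(A × B) → B`
(the components along the canonical frames `𝒳_α` and `𝒱_α`).
-/

set_option synthInstance.maxHeartbeats 1000000
set_option maxHeartbeats 1000000

noncomputable section

variable {A B : Type*} [NormedAddCommGroup A] [NormedSpace ℝ A]
  [NormedAddCommGroup B] [NormedSpace ℝ B]

/-- Sections of the prolongation `L^π E → E`. -/
abbrev Sec (A B : Type*) := ((A × B) → B) × ((A × B) → B)

/-- The axioms of a Lie algebroid (smoothness, antisymmetry and the two
structure equations: anchor compatibility and the Jacobi identity). -/
def IsLieAlgebroidData (ρ : A → B →L[ℝ] A) (Lb : A → B →L[ℝ] B →L[ℝ] B) : Prop :=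
  ContDiff ℝ (⊤ : ℕ∞) ρ ∧ ContDiff ℝ (⊤ : ℕ∞) Lb ∧
    (∀ x u v, Lb x u v = - Lb x v u) ∧
    (∀ x u v, fderiv ℝ ρ x (ρ x u) v - fderiv ℝ ρ x (ρ x v) u = ρ x (Lb x u v)) ∧
    (∀ x u v w,
      fderiv ℝ Lb x (ρ x u) v w + Lb x u (Lb x v w) +
        fderiv ℝ Lb x (ρ x v) w u + Lb x v (Lb x w u) +
          fderiv ℝ Lb x (ρ x w) u v + Lb x w (Lb x u v) = 0)

/-- The Lie algebroid bracket `[X, Y]_E` of two sections of `E`. -/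
def abr (ρ : A → B →L[ℝ] A) (Lb : A → B →L[ℝ] B →L[ℝ] B) (X Y : A → B) : A → B :=
  fun x => fderiv ℝ Y x (ρ x (X x)) - fderiv ℝ X x (ρ x (Y x)) + Lb x (X x) (Y x)

/-- The action `ρ(X)(f)` of a section through the anchor. -/
def ρf (ρ : A → B →L[ℝ] A) (X : A → B) (f : A → ℝ) : A → ℝ :=
  fun x => fderiv ℝ f x (ρ x (X x))

/-- Vertical lift `f^∨ = f ∘ π` of a function on `M`. -/
def fvert (f : A → ℝ) : A × B → ℝ := fun p => f p.1

/-- Complete lift `f^c(u) = ρ(u)(f)` of a function on `M`. -/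
def fcomp (ρ : A → B →L[ℝ] A) (f : A → ℝ) : A × B → ℝ :=
  fun p => fderiv ℝ f p.1 (ρ p.1 p.2)

/-- The tangent vector to `E` determined by a prolongation section through the
prolongation anchor `ρ_L(u, z) = z`. -/
def ρL (ρ : A → B →L[ℝ] A) (U : Sec A B) (p : A × B) : A × B :=
  (ρ p.1 (U.1 p), U.2 p)

/-- The bracket `[·,·]_L` of the prolongation Lie algebroid `L^π E`. -/
def pbr (ρ : A → B →L[ℝ] A) (Lb : A → B →L[ℝ] B →L[ℝ] B) (U V : Sec A B) : Sec A B :=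
  (fun p => fderiv ℝ V.1 p (ρL ρ U p) - fderiv ℝ U.1 p (ρL ρ V p) + Lb p.1 (U.1 p) (V.1 p),
   fun p => fderiv ℝ V.2 p (ρL ρ U p) - fderiv ℝ U.2 p (ρL ρ V p))

/-- The vertical endomorphism `J = i ∘ j` of `L^π E`. -/
def vJ (U : Sec A B) : Sec A B := (0, U.1)

/-- The Liouville (Euler) section `C = i ∘ δ`. -/
def Liou : Sec A B := (0, fun p => p.2)

/-- Vertical lift `X^V` of a section of `E` to `L^π E`. -/
def vlift (X : A → B) : Sec A B := (0, fun p => X p.1)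

/-- Complete lift `X^C` of a section of `E` to `L^π E`. -/
def clift (ρ : A → B →L[ℝ] A) (Lb : A → B →L[ℝ] B →L[ℝ] B) (X : A → B) : Sec A B :=
  (fun p => X p.1, fun p => fderiv ℝ X p.1 (ρ p.1 p.2) - Lb p.1 (X p.1) p.2)

/-- The horizontal endomorphism with coefficient `𝓑`
(`h = (𝒳_β + 𝓑^α_β 𝒱_α) ⊗ 𝒳^β`). -/
def hor (𝓑 : A × B → B →L[ℝ] B) (U : Sec A B) : Sec A B :=
  (U.1, fun p => 𝓑 p (U.1 p))

/-- The vertical projector `v = Id − h` associated to a horizontal endomorphism. -/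
def vpr (𝓑 : A × B → B →L[ℝ] B) (U : Sec A B) : Sec A B := U - hor 𝓑 U

/-- Horizontal lift `X^h = h(X^C)`. -/
def hlift (ρ : A → B →L[ℝ] A) (Lb : A → B →L[ℝ] B →L[ℝ] B)
    (𝓑 : A × B → B →L[ℝ] B) (X : A → B) : Sec A B :=
  hor 𝓑 (clift ρ Lb X)

/-- Multiplication of a prolongation section by a function on `E`. -/
def fsmul (g : A × B → ℝ) (U : Sec A B) : Sec A B :=
  (fun p => g p • U.1 p, fun p => g p • U.2 p)

/-- Generalized Frölicher–Nijenhuis bracket `[K, Z]^{F-N}` of a `(1,1)`-tensor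
with a section: `[K, Z]^{F-N}(U) = [K(U), Z]_L − K([U, Z]_L)`. -/
def fnKZ (ρ : A → B →L[ℝ] A) (Lb : A → B →L[ℝ] B →L[ℝ] B)
    (K : Sec A B → Sec A B) (Z U : Sec A B) : Sec A B :=
  pbr ρ Lb (K U) Z - K (pbr ρ Lb U Z)

/-- Generalized Frölicher–Nijenhuis bracket `[Z, K]^{F-N}` of a section with a
`(1,1)`-tensor. -/
def fnZK (ρ : A → B →L[ℝ] A) (Lb : A → B →L[ℝ] B →L[ℝ] B)
    (Z : Sec A B) (K : Sec A B → Sec A B) (U : Sec A B) : Sec A B :=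
  pbr ρ Lb Z (K U) - K (pbr ρ Lb Z U)

/-- Generalized Frölicher–Nijenhuis bracket of two `(1,1)`-tensors, evaluated on
two sections. -/
def fnKL (ρ : A → B →L[ℝ] A) (Lb : A → B →L[ℝ] B →L[ℝ] B)
    (K L' : Sec A B → Sec A B) (U V : Sec A B) : Sec A B :=
  pbr ρ Lb (K U) (L' V) + pbr ρ Lb (L' U) (K V)
    + K (L' (pbr ρ Lb U V)) + L' (K (pbr ρ Lb U V))
    - K (pbr ρ Lb U (L' V)) - K (pbr ρ Lb (L' U) V)
    - L' (pbr ρ Lb U (K V)) - L' (pbr ρ Lb (K U) V)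

/-- The slit total space `E ∖ {0}` (complement of the zero section). -/
def Slit : Set (A × B) := {p | p.2 ≠ 0}

/-- Smoothness of a prolongation section (on all of `E`). -/
def SecSmooth (U : Sec A B) : Prop :=
  ContDiff ℝ (⊤ : ℕ∞) U.1 ∧ ContDiff ℝ (⊤ : ℕ∞) U.2

/-- Smoothness of a prolongation section away from the zero section. -/
def SecSmoothOn (U : Sec A B) : Prop :=
  ContDiffOn ℝ (⊤ : ℕ∞) U.1 (Slit (A := A) (B := B)) ∧
    ContDiffOn ℝ (⊤ : ℕ∞) U.2 (Slit (A := A) (B := B))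

/-- Equality of prolongation sections away from the zero section. -/
def OnSlit (U V : Sec A B) : Prop :=
  ∀ p : A × B, p.2 ≠ 0 → U.1 p = V.1 p ∧ U.2 p = V.2 p

/-- The semispray associated to the horizontal endomorphism `𝓑` (i.e. `h(S)` for
any semispray `S`). -/
def Sassoc (𝓑 : A × B → B →L[ℝ] B) : Sec A B :=
  (fun p => p.2, fun p => 𝓑 p p.2)

/-- The Nijenhuis tensor `N_h` of the horizontal endomorphism `𝓑`. -/
def NijH (ρ : A → B →L[ℝ] A) (Lb : A → B →L[ℝ] B →L[ℝ] B)
    (𝓑 : A × B → B →L[ℝ] B) (U V : Sec A B) : Sec A B :=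
  pbr ρ Lb (hor 𝓑 U) (hor 𝓑 V) - hor 𝓑 (pbr ρ Lb (hor 𝓑 U) V)
    - hor 𝓑 (pbr ρ Lb U (hor 𝓑 V)) + hor 𝓑 (pbr ρ Lb U V)

/-- The curvature `Ω = −N_h` of a horizontal endomorphism. -/
def CurvH (ρ : A → B →L[ℝ] A) (Lb : A → B →L[ℝ] B →L[ℝ] B)
    (𝓑 : A × B → B →L[ℝ] B) (U V : Sec A B) : Sec A B :=
  - NijH ρ Lb 𝓑 U V

/-- The strong torsion `T = i_S t + H` of a horizontal endomorphism, where
`t = [J, h]^{F-N}` is the weak torsion and `H = [h, C]^{F-N}` the tension. -/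
def StrongTor (ρ : A → B →L[ℝ] A) (Lb : A → B →L[ℝ] B →L[ℝ] B)
    (𝓑 : A × B → B →L[ℝ] B) (U : Sec A B) : Sec A B :=
  fnKL ρ Lb vJ (hor 𝓑) (Sassoc 𝓑) U + fnKZ ρ Lb (hor 𝓑) Liou U

/-- The almost complex structure `F = h ∘ [S, h]^{F-N} − J` induced by a
horizontal endomorphism with associated semispray `S`. -/
def bigF (ρ : A → B →L[ℝ] A) (Lb : A → B →L[ℝ] B →L[ℝ] B)
    (𝓑 : A × B → B →L[ℝ] B) (U : Sec A B) : Sec A B :=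
  hor 𝓑 (fnZK ρ Lb (Sassoc 𝓑) (hor 𝓑) U) - vJ U

/-- Homogeneity of a horizontal endomorphism: its tension `H = [h, C]^{F-N}`
vanishes. -/
def HomogeneousH (ρ : A → B →L[ℝ] A) (Lb : A → B →L[ℝ] B →L[ℝ] B)
    (𝓑 : A × B → B →L[ℝ] B) : Prop :=
  ∀ U : Sec A B, SecSmoothOn U → OnSlit (fnKZ ρ Lb (hor 𝓑) Liou U) 0

/-- Torsion-freeness of a horizontal endomorphism: its weak torsion
`t = [J, h]^{F-N}` vanishes. -/
def TorsionFreeH (ρ : A → B →L[ℝ] A) (Lb : A → B →L[ℝ] B →L[ℝ] B)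
    (𝓑 : A × B → B →L[ℝ] B) : Prop :=
  ∀ U V : Sec A B, SecSmoothOn U → SecSmoothOn V →
    OnSlit (fnKL ρ Lb vJ (hor 𝓑) U V) 0

/-- The one-form `d^L_J F = i_J d^L F` of a Finsler function. -/
def θF (Fl : A × B → ℝ) (U : Sec A B) : A × B → ℝ :=
  fun p => fderiv ℝ Fl p ((0 : A), U.1 p)

/-- The fundamental two-form `ω = d^L d^L_J F` of a Finsler function. -/
def ωF (ρ : A → B →L[ℝ] A) (Lb : A → B →L[ℝ] B →L[ℝ] B)
    (Fl : A × B → ℝ) (U V : Sec A B) : A × B → ℝ :=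
  fun p => fderiv ℝ (θF Fl V) p (ρL ρ U p) - fderiv ℝ (θF Fl U) p (ρL ρ V p)
    - θF Fl (pbr ρ Lb U V) p

/-- The axioms of a Finsler algebroid: the fundamental function is smooth away
from the zero section, positive there, homogeneous of degree `2`
(`ρ_L(C)(F) = 2F`), and its fundamental form `ω = d^L d^L_J F` is
nondegenerate. -/
def IsFinslerData (ρ : A → B →L[ℝ] A) (Lb : A → B →L[ℝ] B →L[ℝ] B)
    (Fl : A × B → ℝ) : Prop :=
  ContDiffOn ℝ (⊤ : ℕ∞) Fl (Slit (A := A) (B := B)) ∧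
    (∀ p : A × B, p.2 ≠ 0 → 0 < Fl p) ∧
    (∀ p : A × B, p.2 ≠ 0 → fderiv ℝ Fl p ((0 : A), p.2) = 2 * Fl p) ∧
    (∀ W : Sec A B, SecSmoothOn W →
      (∀ U : Sec A B, SecSmoothOn U → ∀ p : A × B, p.2 ≠ 0 → ωF ρ Lb Fl W U p = 0) →
      ∀ p : A × B, p.2 ≠ 0 → W.1 p = 0 ∧ W.2 p = 0)

/-- Conservativity of a horizontal endomorphism: `d^L_h F = 0`. -/
def Conservative (ρ : A → B →L[ℝ] A) (Fl : A × B → ℝ)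
    (𝓑 : A × B → B →L[ℝ] B) : Prop :=
  ∀ p : A × B, p.2 ≠ 0 → ∀ z : B, fderiv ℝ Fl p (ρ p.1 z, 𝓑 p z) = 0

/-- The vertical metric `G(J X̃, J Ỹ) = ω(J X̃, Ỹ)`, evaluated on two vertical
sections. -/
def Gmet (ρ : A → B →L[ℝ] A) (Lb : A → B →L[ℝ] B →L[ℝ] B)
    (Fl : A × B → ℝ) (W₁ W₂ : Sec A B) : A × B → ℝ :=
  ωF ρ Lb Fl ((0 : (A × B) → B), W₁.2) (W₂.2, (0 : (A × B) → B))

/-- The prolongation `G̃(X̃, Ỹ) = G(J X̃, J Ỹ) + G(v X̃, v Ỹ)` of the vertical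
metric along the horizontal endomorphism `𝓑`. -/
def Gtil (ρ : A → B →L[ℝ] A) (Lb : A → B →L[ℝ] B →L[ℝ] B)
    (Fl : A × B → ℝ) (𝓑 : A × B → B →L[ℝ] B) (U V : Sec A B) : A × B → ℝ :=
  fun p => Gmet ρ Lb Fl (vJ U) (vJ V) p + Gmet ρ Lb Fl (vpr 𝓑 U) (vpr 𝓑 V) p

/-- The linear connection on `E` with Christoffel coefficient `Γ`:
`∇_X Y = ρ(X)(Y) + Γ(X, Y)`. -/
def covD (ρ : A → B →L[ℝ] A) (Γ : A → B →L[ℝ] B →L[ℝ] B) (X Y : A → B) : A → B :=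
  fun x => fderiv ℝ Y x (ρ x (X x)) + Γ x (X x) (Y x)

/-- The coefficient of the horizontal endomorphism `h_∇` generated by the linear
connection `Γ` (`𝓑^β_α = −y^γ Γ^β_{αγ}`). -/
def horOf (Γ : A → B →L[ℝ] B →L[ℝ] B) : A × B → B →L[ℝ] B :=
  fun p => -((Γ p.1).flip p.2)

section GradHelpers

open Filter Topology ContinuousLinearMap

variable {ρ : A → B →L[ℝ] A} {Lb : A → B →L[ℝ] B →L[ℝ] B} {Fl : A × B → ℝ}

theorem isOpen_slit : IsOpen (Slit (A := A) (B := B)) :=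
  isOpen_compl_singleton.preimage continuous_snd

theorem one_le_coe_top : ((⊤ : ℕ∞) : WithTop ℕ∞) ≠ 0 := by
  simp

theorem top_add_one_le : ((⊤ : ℕ∞) : WithTop ℕ∞) + 1 ≤ ((⊤ : ℕ∞) : WithTop ℕ∞) := by
  simp

/-- differentiability ladder at a slit point -/
theorem slit_contDiffAt (hFl : ContDiffOn ℝ (⊤ : ℕ∞) Fl (Slit (A := A) (B := B)))
    {p : A × B} (hp : p.2 ≠ 0) : ContDiffAt ℝ (⊤ : ℕ∞) Fl p :=
  hFl.contDiffAt (isOpen_slit.mem_nhds hp)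

theorem hasD1 (hFl : ContDiffOn ℝ (⊤ : ℕ∞) Fl (Slit (A := A) (B := B)))
    {p : A × B} (hp : p.2 ≠ 0) : HasFDerivAt Fl (fderiv ℝ Fl p) p :=
  ((slit_contDiffAt hFl hp).differentiableAt one_le_coe_top).hasFDerivAt

theorem hasD2 (hFl : ContDiffOn ℝ (⊤ : ℕ∞) Fl (Slit (A := A) (B := B)))
    {p : A × B} (hp : p.2 ≠ 0) :
    HasFDerivAt (fderiv ℝ Fl) (fderiv ℝ (fderiv ℝ Fl) p) p :=
  ((((slit_contDiffAt hFl hp)).fderiv_right top_add_one_le).differentiableAt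
    one_le_coe_top).hasFDerivAt

theorem hasD3 (hFl : ContDiffOn ℝ (⊤ : ℕ∞) Fl (Slit (A := A) (B := B)))
    {p : A × B} (hp : p.2 ≠ 0) :
    HasFDerivAt (fderiv ℝ (fderiv ℝ Fl))
      (fderiv ℝ (fderiv ℝ (fderiv ℝ Fl)) p) p :=
  (((((slit_contDiffAt hFl hp)).fderiv_right top_add_one_le).fderiv_right
    top_add_one_le).differentiableAt one_le_coe_top).hasFDerivAt

/-- derivative of `θF` at a slit point (applied form) -/
theorem theta_fderiv_apply (hFl : ContDiffOn ℝ (⊤ : ℕ∞) Fl (Slit (A := A) (B := B)))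
    {p : A × B} (hp : p.2 ≠ 0) {U : Sec A B} (hU : DifferentiableAt ℝ U.1 p) (h : A × B) :
    fderiv ℝ (θF Fl U) p h
      = fderiv ℝ (fderiv ℝ Fl) p h ((0 : A), U.1 p)
        + fderiv ℝ Fl p ((0 : A), fderiv ℝ U.1 p h) := by
  have hu : HasFDerivAt (fun q : A × B => (((0 : A), U.1 q) : A × B))
      (((0 : (A × B) →L[ℝ] A)).prod (fderiv ℝ U.1 p)) p :=
    HasFDerivAt.prodMk (hasFDerivAt_const (0 : A) p) hU.hasFDerivAt
  have hθ := (hasD2 hFl hp).clm_apply hu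
  have : fderiv ℝ (θF Fl U) p
      = (fderiv ℝ Fl p).comp (((0 : (A × B) →L[ℝ] A)).prod (fderiv ℝ U.1 p))
        + (fderiv ℝ (fderiv ℝ Fl) p).flip ((0 : A), U.1 p) := by
    exact hθ.fderiv
  rw [this]
  simp [ContinuousLinearMap.add_apply, ContinuousLinearMap.comp_apply,
    ContinuousLinearMap.flip_apply, ContinuousLinearMap.prod_apply]
  ring

/-- the coordinate-free formula for the fundamental form -/
theorem omega_eq (hFl : ContDiffOn ℝ (⊤ : ℕ∞) Fl (Slit (A := A) (B := B)))
    {p : A × B} (hp : p.2 ≠ 0) {U V : Sec A B}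
    (hU : DifferentiableAt ℝ U.1 p) (hV : DifferentiableAt ℝ V.1 p) :
    ωF ρ Lb Fl U V p
      = fderiv ℝ (fderiv ℝ Fl) p (ρL ρ U p) ((0 : A), V.1 p)
        - fderiv ℝ (fderiv ℝ Fl) p (ρL ρ V p) ((0 : A), U.1 p)
        - fderiv ℝ Fl p ((0 : A), Lb p.1 (U.1 p) (V.1 p)) := by
  have h1 := theta_fderiv_apply hFl hp hV (ρL ρ U p)
  have h2 := theta_fderiv_apply hFl hp hU (ρL ρ V p)
  have h3 : θF Fl (pbr ρ Lb U V) p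
      = fderiv ℝ Fl p ((0 : A),
          fderiv ℝ V.1 p (ρL ρ U p) - fderiv ℝ U.1 p (ρL ρ V p)
            + Lb p.1 (U.1 p) (V.1 p)) := by
    simp [θF, pbr]
  have hsplit : ((0 : A),
      fderiv ℝ V.1 p (ρL ρ U p) - fderiv ℝ U.1 p (ρL ρ V p) + Lb p.1 (U.1 p) (V.1 p))
      = (((0 : A), fderiv ℝ V.1 p (ρL ρ U p)) : A × B)
        - ((0 : A), fderiv ℝ U.1 p (ρL ρ V p)) + ((0 : A), Lb p.1 (U.1 p) (V.1 p)) := by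
    simp [Prod.ext_iff]
  rw [ωF, h1, h2, h3, hsplit, map_add, map_sub]
  ring

end GradHelpers

section GradHelpers2

open Filter Topology ContinuousLinearMap

variable {A B : Type*} [NormedAddCommGroup A] [NormedSpace ℝ A]
  [NormedAddCommGroup B] [NormedSpace ℝ B]
  {Fl : A × B → ℝ}

/-- symmetry of the second fibre derivative -/
theorem symH (hFl : ContDiffOn ℝ (⊤ : ℕ∞) Fl (Slit (A := A) (B := B)))
    {p : A × B} (hp : p.2 ≠ 0) (v w : A × B) :
    fderiv ℝ (fderiv ℝ Fl) p v w = fderiv ℝ (fderiv ℝ Fl) p w v := by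
  have hev : ∀ᶠ y in 𝓝 p, HasFDerivAt Fl (fderiv ℝ Fl y) y := by
    filter_upwards [isOpen_slit.mem_nhds hp] with q hq
    exact hasD1 hFl hq
  exact second_derivative_symmetric_of_eventually hev (hasD2 hFl hp) v w

/-- symmetry of the third derivative in its first two arguments -/
theorem symT12 (hFl : ContDiffOn ℝ (⊤ : ℕ∞) Fl (Slit (A := A) (B := B)))
    {p : A × B} (hp : p.2 ≠ 0) (v w : A × B) :
    fderiv ℝ (fderiv ℝ (fderiv ℝ Fl)) p v w
      = fderiv ℝ (fderiv ℝ (fderiv ℝ Fl)) p w v := by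
  have hev : ∀ᶠ y in 𝓝 p, HasFDerivAt (fderiv ℝ Fl) (fderiv ℝ (fderiv ℝ Fl) y) y := by
    filter_upwards [isOpen_slit.mem_nhds hp] with q hq
    exact hasD2 hFl hq
  exact second_derivative_symmetric_of_eventually hev (hasD3 hFl hp) v w

/-- symmetry of the third derivative in its last two arguments -/
theorem symT23 (hFl : ContDiffOn ℝ (⊤ : ℕ∞) Fl (Slit (A := A) (B := B)))
    {p : A × B} (hp : p.2 ≠ 0) (h k l : A × B) :
    fderiv ℝ (fderiv ℝ (fderiv ℝ Fl)) p h k l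
      = fderiv ℝ (fderiv ℝ (fderiv ℝ Fl)) p h l k := by
  set T : (A × B) → (A × B) →L[ℝ] (A × B) →L[ℝ] ℝ := fderiv ℝ (fderiv ℝ Fl) with hT
  have hσ0 : (fun q => T q k l - T q l k) =ᶠ[𝓝 p] fun _ => (0 : ℝ) := by
    filter_upwards [isOpen_slit.mem_nhds hp] with q hq
    simp [hT, symH hFl hq k l]
  -- derivative of q ↦ T q k l
  have hmk : HasFDerivAt (fun q => T q k)
      ((T p).comp (0 : (A × B) →L[ℝ] (A × B))
        + (fderiv ℝ T p).flip k) p :=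
    (hasD3 hFl hp).clm_apply (hasFDerivAt_const k p)
  have hmkl : HasFDerivAt (fun q => T q k l)
      (((fun q => T q k) p).comp (0 : (A × B) →L[ℝ] (A × B))
        + ((T p).comp (0 : (A × B) →L[ℝ] (A × B))
            + (fderiv ℝ T p).flip k).flip l) p :=
    hmk.clm_apply (hasFDerivAt_const l p)
  have hml : HasFDerivAt (fun q => T q l)
      ((T p).comp (0 : (A × B) →L[ℝ] (A × B))
        + (fderiv ℝ T p).flip l) p :=
    (hasD3 hFl hp).clm_apply (hasFDerivAt_const l p)
  have hmlk : HasFDerivAt (fun q => T q l k)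
      (((fun q => T q l) p).comp (0 : (A × B) →L[ℝ] (A × B))
        + ((T p).comp (0 : (A × B) →L[ℝ] (A × B))
            + (fderiv ℝ T p).flip l).flip k) p :=
    hml.clm_apply (hasFDerivAt_const k p)
  have hσ := (hmkl.sub hmlk).fderiv
  simp only [Pi.sub_def] at hσ
  rw [hσ0.fderiv_eq, fderiv_const_apply] at hσ
  have := congrArg (fun L => L h) hσ.symm
  simp at this
  linarith

/-- first Euler identity: `H(0,a)(0,p.2) = dF(0,a)` -/
theorem euler1 (hFl : ContDiffOn ℝ (⊤ : ℕ∞) Fl (Slit (A := A) (B := B)))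
    (heu : ∀ q : A × B, q.2 ≠ 0 → fderiv ℝ Fl q ((0 : A), q.2) = 2 * Fl q)
    {p : A × B} (hp : p.2 ≠ 0) (a : B) :
    fderiv ℝ (fderiv ℝ Fl) p ((0 : A), a) ((0 : A), p.2) = fderiv ℝ Fl p ((0 : A), a) := by
  have hu : HasFDerivAt (fun q : A × B => (((0 : A), q.2) : A × B))
      (((0 : (A × B) →L[ℝ] A)).prod (ContinuousLinearMap.snd ℝ A B)) p :=
    HasFDerivAt.prodMk (hasFDerivAt_const (0 : A) p) hasFDerivAt_snd
  have h1 : HasFDerivAt (fun q : A × B => fderiv ℝ Fl q ((0 : A), q.2))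
      ((fderiv ℝ Fl p).comp (((0 : (A × B) →L[ℝ] A)).prod (ContinuousLinearMap.snd ℝ A B))
        + (fderiv ℝ (fderiv ℝ Fl) p).flip ((0 : A), p.2)) p :=
    (hasD2 hFl hp).clm_apply hu
  have h2 : HasFDerivAt (fun q : A × B => (2 : ℝ) * Fl q)
      ((2 : ℝ) • fderiv ℝ Fl p) p := (hasD1 hFl hp).const_mul 2
  have hφ := (h1.sub h2).fderiv
  have hev : (fun q : A × B => fderiv ℝ Fl q ((0 : A), q.2) - 2 * Fl q)
      =ᶠ[𝓝 p] fun _ => (0 : ℝ) := by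
    filter_upwards [isOpen_slit.mem_nhds hp] with q hq
    simp [heu q hq]
  simp only [Pi.sub_def] at hφ
  rw [hev.fderiv_eq, fderiv_const_apply] at hφ
  have := congrArg (fun L => L (((0 : A), a) : A × B)) hφ.symm
  simp [ContinuousLinearMap.add_apply, ContinuousLinearMap.comp_apply,
    ContinuousLinearMap.flip_apply, ContinuousLinearMap.prod_apply,
    ContinuousLinearMap.smul_apply] at this
  linarith

/-- second Euler identity. -/
theorem euler2 (hFl : ContDiffOn ℝ (⊤ : ℕ∞) Fl (Slit (A := A) (B := B)))
    (heu : ∀ q : A × B, q.2 ≠ 0 → fderiv ℝ Fl q ((0 : A), q.2) = 2 * Fl q)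
    {p : A × B} (hp : p.2 ≠ 0) (a b : B) :
    fderiv ℝ (fderiv ℝ (fderiv ℝ Fl)) p ((0 : A), b) ((0 : A), a) ((0 : A), p.2) = 0 := by
  set T : (A × B) → (A × B) →L[ℝ] (A × B) →L[ℝ] ℝ := fderiv ℝ (fderiv ℝ Fl) with hT
  have hma : HasFDerivAt (fun q => T q (((0 : A), a) : A × B))
      ((T p).comp (0 : (A × B) →L[ℝ] (A × B))
        + (fderiv ℝ T p).flip ((0 : A), a)) p :=
    (hasD3 hFl hp).clm_apply (hasFDerivAt_const (((0 : A), a) : A × B) p)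
  have hu : HasFDerivAt (fun q : A × B => (((0 : A), q.2) : A × B))
      (((0 : (A × B) →L[ℝ] A)).prod (ContinuousLinearMap.snd ℝ A B)) p :=
    HasFDerivAt.prodMk (hasFDerivAt_const (0 : A) p) hasFDerivAt_snd
  have h1 : HasFDerivAt (fun q => T q (((0 : A), a) : A × B) ((0 : A), q.2))
      (((fun q => T q (((0 : A), a) : A × B)) p).comp
          (((0 : (A × B) →L[ℝ] A)).prod (ContinuousLinearMap.snd ℝ A B))
        + ((T p).comp (0 : (A × B) →L[ℝ] (A × B))
            + (fderiv ℝ T p).flip ((0 : A), a)).flip ((0 : A), p.2)) p :=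
    hma.clm_apply hu
  have h2 : HasFDerivAt (fun q => fderiv ℝ Fl q (((0 : A), a) : A × B))
      ((fderiv ℝ Fl p).comp (0 : (A × B) →L[ℝ] (A × B))
        + (T p).flip ((0 : A), a)) p :=
    (hasD2 hFl hp).clm_apply (hasFDerivAt_const (((0 : A), a) : A × B) p)
  have hψ := (h1.sub h2).fderiv
  have hev : (fun q : A × B => T q (((0 : A), a) : A × B) ((0 : A), q.2)
      - fderiv ℝ Fl q (((0 : A), a) : A × B)) =ᶠ[𝓝 p] fun _ => (0 : ℝ) := by
    filter_upwards [isOpen_slit.mem_nhds hp] with q hq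
    simp [hT, euler1 hFl heu hq a]
  simp only [Pi.sub_def] at hψ
  rw [hev.fderiv_eq, fderiv_const_apply] at hψ
  have h0 := congrArg (fun L => L (((0 : A), b) : A × B)) hψ.symm
  simp [ContinuousLinearMap.add_apply, ContinuousLinearMap.comp_apply,
    ContinuousLinearMap.flip_apply, ContinuousLinearMap.prod_apply] at h0
  -- h0 : T p (0,a) (0,b) + T' (0,b) (0,a) (0,p.2) - T p (0,b) (0,a) = 0 (in some arrangement)
  have hsym := symH hFl hp (((0 : A), a) : A × B) (((0 : A), b) : A × B)
  linarith

end GradHelpers2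

open Filter Topology ContinuousLinearMap in
/-- On a Finsler algebroid, the gradient of `f^∨` (defined by
`d^L(f^∨) = i_{grad f^∨} ω`) is vertical, satisfies
`[C, grad f^∨]_L = −grad f^∨` and `ρ_L(grad f^∨)(F) = f^c`. -/
theorem gradient_of_vertical_lift
    (ρ : A → B →L[ℝ] A) (Lb : A → B →L[ℝ] B →L[ℝ] B)
    (halg : IsLieAlgebroidData ρ Lb)
    (Fl : A × B → ℝ) (hF : IsFinslerData ρ Lb Fl)
    (f : A → ℝ) (hf : ContDiff ℝ (⊤ : ℕ∞) f)
    (G : Sec A B) (hGs : SecSmoothOn G)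
    -- the defining property `i_{grad f^∨} ω = d^L (f^∨)`:
    (hdef : ∀ U : Sec A B, SecSmoothOn U → ∀ p : A × B, p.2 ≠ 0 →
      ωF ρ Lb Fl G U p = fderiv ℝ (fvert (B := B) f) p (ρL ρ U p)) :
    (∀ p : A × B, p.2 ≠ 0 → G.1 p = 0) ∧
    OnSlit (pbr ρ Lb Liou G) (-G) ∧
    (∀ p : A × B, p.2 ≠ 0 → fderiv ℝ Fl p (ρL ρ G p) = fcomp ρ f p) := by
  classical
  obtain ⟨hFl, hpos, heu, hnd⟩ := hF
  have hdG1 : ∀ q : A × B, q.2 ≠ 0 → DifferentiableAt ℝ G.1 q := fun q hq =>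
    (hGs.1.contDiffAt (isOpen_slit.mem_nhds hq)).differentiableAt one_le_coe_top
  have hdG2 : ∀ q : A × B, q.2 ≠ 0 → DifferentiableAt ℝ G.2 q := fun q hq =>
    (hGs.2.contDiffAt (isOpen_slit.mem_nhds hq)).differentiableAt one_le_coe_top
  -- derivative of the vertical lift of `f`
  have hfvert : ∀ (q h : A × B), fderiv ℝ (fvert (B := B) f) q h = fderiv ℝ f q.1 h.1 := by
    intro q h
    have hc : HasFDerivAt (fvert (B := B) f)
        ((fderiv ℝ f q.1).comp (ContinuousLinearMap.fst ℝ A B)) q :=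
      (hf.differentiable one_le_coe_top q.1).hasFDerivAt.comp q hasFDerivAt_fst
    rw [hc.fderiv]; rfl
  -- step 1: `H_q(0,u)(0, G.1 q) = 0` for every `u`
  have hstar0 : ∀ q : A × B, q.2 ≠ 0 → ∀ u : B,
      fderiv ℝ (fderiv ℝ Fl) q ((0 : A), u) ((0 : A), G.1 q) = 0 := by
    intro q hq u
    have hd := hdef ((fun _ => (0 : B)), (fun _ => u)) ⟨contDiffOn_const, contDiffOn_const⟩ q hq
    rw [omega_eq hFl hq (hdG1 q hq) (differentiableAt_const _)] at hd
    simp only [ρL, hfvert] at hd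
    simpa [Prod.mk_zero_zero] using hd
  -- part (i): verticality
  have hvert : ∀ q : A × B, q.2 ≠ 0 → G.1 q = 0 := by
    intro q hq
    refine (hnd ((fun _ => (0 : B)), G.1) ⟨contDiffOn_const, hGs.1⟩ ?_ q hq).2
    intro U hU r hr
    rw [omega_eq hFl hr (differentiableAt_const _)
      ((hU.1.contDiffAt (isOpen_slit.mem_nhds hr)).differentiableAt one_le_coe_top)]
    have h1 : fderiv ℝ (fderiv ℝ Fl) r ((0 : A), G.1 r) ((0 : A), U.1 r)
        = fderiv ℝ (fderiv ℝ Fl) r ((0 : A), U.1 r) ((0 : A), G.1 r) :=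
      symH hFl hr _ _
    simp only [ρL]
    simp [h1, hstar0 r hr (U.1 r), Prod.mk_zero_zero]
  have hρLG : ∀ q : A × B, q.2 ≠ 0 → ρL ρ G q = ((0 : A), G.2 q) := by
    intro q hq; simp [ρL, hvert q hq]
  -- step 2: `H_q(0, G.2 q)(0, u) = df(ρ u)`
  have hstar : ∀ q : A × B, q.2 ≠ 0 → ∀ u : B,
      fderiv ℝ (fderiv ℝ Fl) q ((0 : A), G.2 q) ((0 : A), u)
        = fderiv ℝ f q.1 (ρ q.1 u) := by
    intro q hq u
    have hd := hdef ((fun _ => u), (fun _ => (0 : B))) ⟨contDiffOn_const, contDiffOn_const⟩ q hq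
    rw [omega_eq hFl hq (hdG1 q hq) (differentiableAt_const _)] at hd
    rw [hρLG q hq] at hd
    simp only [ρL, hfvert] at hd
    simpa [hvert q hq, Prod.mk_zero_zero] using hd
  -- part (iii)
  have hpart3 : ∀ p : A × B, p.2 ≠ 0 → fderiv ℝ Fl p (ρL ρ G p) = fcomp ρ f p := by
    intro p hp
    rw [hρLG p hp]
    have h1 := euler1 hFl heu hp (G.2 p)
    have h2 := hstar p hp p.2
    rw [← h1, h2]; rfl
  -- step 3: the core vanishing for part (ii)
  have hcore : ∀ q : A × B, q.2 ≠ 0 → ∀ u : B,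
      fderiv ℝ (fderiv ℝ Fl) q ((0 : A), fderiv ℝ G.2 q ((0 : A), q.2)) ((0 : A), u)
        = 0 := by
    intro q hq u
    set T : (A × B) → (A × B) →L[ℝ] (A × B) →L[ℝ] ℝ := fderiv ℝ (fderiv ℝ Fl) with hT
    have hA : HasFDerivAt (fun r : A × B => T r ((0 : A), G.2 r))
        ((T q).comp ((0 : (A × B) →L[ℝ] A).prod (fderiv ℝ G.2 q))
          + (fderiv ℝ T q).flip ((0 : A), G.2 q)) q :=
      (hasD3 hFl hq).clm_apply (HasFDerivAt.prodMk (hasFDerivAt_const (0 : A) q) (hdG2 q hq).hasFDerivAt)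
    have hB : HasFDerivAt (fun r : A × B => T r ((0 : A), G.2 r) ((0 : A), u))
        (((fun r : A × B => T r ((0 : A), G.2 r)) q).comp (0 : (A × B) →L[ℝ] (A × B))
          + ((T q).comp ((0 : (A × B) →L[ℝ] A).prod (fderiv ℝ G.2 q))
              + (fderiv ℝ T q).flip ((0 : A), G.2 q)).flip ((0 : A), u)) q :=
      hA.clm_apply (hasFDerivAt_const (((0 : A), u) : A × B) q)
    have hbd : DifferentiableAt ℝ (fun x : A => fderiv ℝ f x (ρ x u)) q.1 :=
      ((hf.fderiv_right top_add_one_le).differentiable one_le_coe_top q.1).clm_apply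
        ((halg.1.differentiable one_le_coe_top q.1).clm_apply (differentiableAt_const u))
    have hC : HasFDerivAt (fun r : A × B => fderiv ℝ f r.1 (ρ r.1 u))
        ((fderiv ℝ (fun x : A => fderiv ℝ f x (ρ x u)) q.1).comp
          (ContinuousLinearMap.fst ℝ A B)) q :=
      hbd.hasFDerivAt.comp q hasFDerivAt_fst
    have hχ := (hB.sub hC).fderiv
    have hev : (fun r : A × B => T r ((0 : A), G.2 r) ((0 : A), u)
        - fderiv ℝ f r.1 (ρ r.1 u)) =ᶠ[𝓝 q] fun _ => (0 : ℝ) := by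
      filter_upwards [isOpen_slit.mem_nhds hq] with r hr
      simp only [hT] at hstar ⊢
      simp [hstar r hr u]
    simp only [Pi.sub_def] at hχ
    rw [hev.fderiv_eq, fderiv_const_apply] at hχ
    have h0 := congrArg (fun L => L (((0 : A), q.2) : A × B)) hχ.symm
    simp only [ContinuousLinearMap.zero_apply, ContinuousLinearMap.add_apply,
      ContinuousLinearMap.sub_apply, ContinuousLinearMap.comp_apply,
      ContinuousLinearMap.flip_apply, ContinuousLinearMap.prod_apply,
      ContinuousLinearMap.coe_fst', ContinuousLinearMap.coe_snd', map_zero] at h0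
    -- symmetry chain
    have hs1 : fderiv ℝ T q (((0 : A), q.2) : A × B) (((0 : A), G.2 q) : A × B)
          (((0 : A), u) : A × B)
        = fderiv ℝ T q (((0 : A), G.2 q) : A × B) (((0 : A), q.2) : A × B)
          (((0 : A), u) : A × B) := by
      rw [hT, symT12 hFl hq (((0 : A), q.2) : A × B) (((0 : A), G.2 q) : A × B)]
    have hs2 := symT23 hFl hq (((0 : A), G.2 q) : A × B) (((0 : A), q.2) : A × B)
      (((0 : A), u) : A × B)
    have hs3 := euler2 hFl heu hq u (G.2 q)
    simp only [hT] at h0 hs1 hs2 hs3 ⊢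
    linarith
  -- the homogeneity identity `fderiv G.2 (0, q.2) = 0`
  have hkey : ∀ q : A × B, q.2 ≠ 0 → fderiv ℝ G.2 q ((0 : A), q.2) = 0 := by
    intro q hq
    have hWsm : SecSmoothOn
        ((fun _ => (0 : B)), fun r : A × B => fderiv ℝ G.2 r ((0 : A), r.2)) := by
      refine ⟨contDiffOn_const, ?_⟩
      have h1 : ContDiffOn ℝ (⊤ : ℕ∞) (fderiv ℝ G.2) (Slit (A := A) (B := B)) := fun r hr =>
        ((hGs.2.contDiffAt (isOpen_slit.mem_nhds hr)).fderiv_right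
          top_add_one_le).contDiffWithinAt
      exact h1.clm_apply ((contDiff_const.prodMk contDiff_snd).contDiffOn)
    refine (hnd _ hWsm ?_ q hq).2
    intro U hU r hr
    rw [omega_eq hFl hr (differentiableAt_const _)
      ((hU.1.contDiffAt (isOpen_slit.mem_nhds hr)).differentiableAt one_le_coe_top)]
    simp only [ρL]
    simp [hcore r hr (U.1 r), Prod.mk_zero_zero]
  refine ⟨hvert, ?_, hpart3⟩
  -- part (ii)
  intro p hp
  have hev1 : G.1 =ᶠ[𝓝 p] fun _ => (0 : B) := by
    filter_upwards [isOpen_slit.mem_nhds hp] with r hr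
    exact hvert r hr
  have hfd1 : fderiv ℝ G.1 p = 0 := by rw [hev1.fderiv_eq]; exact fderiv_const_apply _
  have hz : (Liou : Sec A B).1 = fun _ : A × B => (0 : B) := rfl
  constructor
  · show fderiv ℝ G.1 p (ρL ρ Liou p) - fderiv ℝ Liou.1 p (ρL ρ G p)
      + Lb p.1 (Liou.1 p) (G.1 p) = (-G).1 p
    rw [hfd1, hz, fderiv_const_apply]
    simp [Liou, hvert p hp]
  · show fderiv ℝ G.2 p (ρL ρ Liou p) - fderiv ℝ Liou.2 p (ρL ρ G p) = (-G).2 p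
    have h1 : ρL ρ Liou p = ((0 : A), p.2) := by simp [ρL, Liou]
    have h2 : fderiv ℝ (Liou : Sec A B).2 p = ContinuousLinearMap.snd ℝ A B :=
      hasFDerivAt_snd.fderiv
    rw [h1, h2, hkey p hp]
    simp [ρL]
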